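/- Let p/q and p'/q' be rationals with 2 ≤ q' < q. If a complex number α lies in the closed disk of radius (log 2)/(2π q') tangent to the real axis at p'/q' (from below), then |α − p/q| > 1/q³. -/

import Mathlib

set_option maxHeartbeats 1000000 in
open Real Complex in
/-- Let `p/q` and `p'/q'` be rationals (in lowest terms) with `2 ≤ q' < q`.
If a complex number `α` lies in the closed disk of radius `log 2/(2π q')`
tangent to the real axis at `p'/q'` from below (i.e. the closed disk centered
at `p'/q' − i r` of radius `r = log 2/(2π q')`), then `|α − p/q| > 1/q³`. -/
theorem yoccoz_disk_estimate (p p' : ℤ) (q q' : ℕ)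
    (hpq : Int.gcd p q = 1) (hpq' : Int.gcd p' q' = 1)
    (hq' : 2 ≤ q') (hq'q : q' < q)
    (α : ℂ)
    (hα : α ∈ Metric.closedBall
      ((p' : ℂ) / (q' : ℂ) - (Real.log 2 / (2 * π * q')) * Complex.I)
      (Real.log 2 / (2 * π * q'))) :
    1 / (q : ℝ)^3 < ‖α - (p : ℂ) / (q : ℂ)‖ := by
  have hπ : (0:ℝ) < π := Real.pi_pos
  have hπ3 : (3:ℝ) < π := Real.pi_gt_three
  have hL : (0:ℝ) < Real.log 2 := Real.log_pos (by norm_num)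
  have hL1 : Real.log 2 < 1 := by
    have := Real.log_two_lt_d9; linarith
  have hq'2 : (2:ℝ) ≤ (q':ℝ) := by exact_mod_cast hq'
  have hq'0 : (0:ℝ) < (q':ℝ) := by linarith
  have hq3 : 3 ≤ q := by omega
  have hQ3 : (3:ℝ) ≤ (q:ℝ) := by exact_mod_cast hq3
  have hQ0 : (0:ℝ) < (q:ℝ) := by linarith
  have hq'q' : (q':ℝ) + 1 ≤ (q:ℝ) := by exact_mod_cast hq'q
  set r : ℝ := Real.log 2 / (2 * π * q') with hr
  have hr0 : 0 < r := div_pos hL (by positivity)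
  -- the two fractions are distinct
  have hne : (p' : ℤ) * q ≠ p * q' := by
    intro h
    have hdvd : (q:ℤ) ∣ p * q' := ⟨p', by linarith [h]⟩
    have hco : Int.gcd (q:ℤ) p = 1 := by rwa [Int.gcd_comm]
    have hdvd' : (q:ℤ) ∣ (q':ℤ) := Int.dvd_of_dvd_mul_right_of_gcd_one hdvd hco
    have : (q:ℤ) ≤ (q':ℤ) := Int.le_of_dvd (by exact_mod_cast (by omega : 0 < q')) hdvd'
    omega
  set d : ℝ := (p':ℝ)/(q':ℝ) - (p:ℝ)/(q:ℝ) with hd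
  have hnum : (1:ℝ) ≤ ((p'*q - p*q' : ℤ):ℝ)^2 := by
    have h0 : (p'*q - p*q' : ℤ) ≠ 0 := sub_ne_zero.mpr hne
    have h1 : (1:ℤ) ≤ |p'*q - p*q'| := Int.one_le_abs h0
    have : (1:ℤ) ≤ (p'*q - p*q')^2 := by nlinarith [_root_.sq_abs (p'*q - p*q' : ℤ)]
    exact_mod_cast this
  have hdval : d = ((p'*q - p*q' : ℤ):ℝ) / ((q:ℝ)*(q':ℝ)) := by
    rw [hd]; push_cast; field_simp
  have hd2 : 1/((q:ℝ)*(q':ℝ))^2 ≤ d^2 := by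
    rw [hdval, div_pow]
    gcongr
  -- key real inequality
  have hpoly : π * (q':ℝ)^2 + Real.log 2 * (q:ℝ)^3 * (q':ℝ) < π * (q:ℝ)^4 := by
    have c1 : Real.log 2 * (q:ℝ)^3 * (q':ℝ) < (q:ℝ)^3 * (q':ℝ) := by
      have := mul_lt_mul_of_pos_right hL1 (mul_pos (pow_pos hQ0 3) hq'0)
      linarith [this]
    have c2 : (q:ℝ)^3 * (q':ℝ) ≤ (q:ℝ)^4 - (q:ℝ)^3 := by nlinarith [pow_pos hQ0 3]
    have c3 : π * (q':ℝ)^2 ≤ π * (q:ℝ)^2 :=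
      mul_le_mul_of_nonneg_left (by nlinarith) hπ.le
    have hQ2 : (9:ℝ) ≤ (q:ℝ)^2 := by nlinarith
    have e2 : 3*(q:ℝ)^2 ≤ (q:ℝ)^4 := by nlinarith
    have e3 : 0 < (π - 3) * ((q:ℝ)^4 - (q:ℝ)^2) := mul_pos (by linarith) (by linarith)
    have e3' : 3*(q:ℝ)^4 - 3*(q:ℝ)^2 < π*(q:ℝ)^4 - π*(q:ℝ)^2 := by linarith [e3]
    have c4 : π * (q:ℝ)^2 + ((q:ℝ)^4 - (q:ℝ)^3) < π * (q:ℝ)^4 := by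
      have := pow_pos hQ0 3
      linarith
    linarith
  have h2 : 1/(q:ℝ)^6 + 2*r/(q:ℝ)^3 < 1/((q:ℝ)*(q':ℝ))^2 := by
    rw [hr]
    rw [show (1:ℝ)/(q:ℝ)^6 + 2*(Real.log 2/(2*π*(q':ℝ)))/(q:ℝ)^3
        = (π*(q':ℝ)^2 + Real.log 2 * (q:ℝ)^3 * (q':ℝ)) / (π * (q':ℝ)^2 * (q:ℝ)^6) from by
      field_simp]
    rw [show (1:ℝ)/((q:ℝ)*(q':ℝ))^2 = (π * (q:ℝ)^4) / (π * (q':ℝ)^2 * (q:ℝ)^6) from by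
      field_simp]
    rw [div_lt_div_iff₀ (by positivity) (by positivity)]
    exact mul_lt_mul_of_pos_right hpoly (by positivity)
  have hkey : (1/(q:ℝ)^3 + r)^2 < d^2 + r^2 := by
    have hexp : (1/(q:ℝ)^3 + r)^2 = 1/(q:ℝ)^6 + 2*r/(q:ℝ)^3 + r^2 := by
      field_simp; ring
    rw [hexp]
    linarith [hd2, h2]
  -- from the real inequality to the complex estimate
  have habs : ‖(p' : ℂ) / (q' : ℂ) - (r:ℝ) * Complex.I - (p : ℂ) / (q : ℂ)‖
      = Real.sqrt (d^2 + r^2) := by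
    have heq : (p' : ℂ) / (q' : ℂ) - (r:ℝ) * Complex.I - (p : ℂ) / (q : ℂ)
        = (d:ℝ) + (-r : ℝ) * Complex.I := by
      rw [hd]; push_cast; ring
    rw [heq, Complex.norm_add_mul_I]
    norm_num
  have hmem := Metric.mem_closedBall.mp hα
  rw [Complex.dist_eq] at hmem
  have hcenter : (p' : ℂ) / (q' : ℂ) - ((Real.log 2 : ℝ) : ℂ) / (2 * ((π : ℝ) : ℂ) * (q' : ℂ)) * Complex.I
      = (p' : ℂ) / (q' : ℂ) - (r:ℝ) * Complex.I := by
    rw [hr]; push_cast; ring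
  rw [hcenter] at hmem
  have htri : ‖(p' : ℂ) / (q' : ℂ) - (r:ℝ) * Complex.I - (p : ℂ) / (q : ℂ)‖
      ≤ ‖α - ((p' : ℂ) / (q' : ℂ) - (r:ℝ) * Complex.I)‖
        + ‖α - (p : ℂ) / (q : ℂ)‖ := by
    have harg : (p' : ℂ) / (q' : ℂ) - (r:ℝ) * Complex.I - (p : ℂ) / (q : ℂ)
        = -(α - ((p' : ℂ) / (q' : ℂ) - (r:ℝ) * Complex.I)) + (α - (p : ℂ) / (q : ℂ)) := by
      ring
    have h := norm_add_le (-(α - ((p' : ℂ) / (q' : ℂ) - (r:ℝ) * Complex.I)))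
      (α - (p : ℂ) / (q : ℂ))
    rw [norm_neg] at h
    rw [harg]
    exact h
  have hsqrt : 1/(q:ℝ)^3 + r < Real.sqrt (d^2 + r^2) := by
    exact (Real.lt_sqrt (by positivity)).mpr hkey
  rw [habs] at htri
  linarith [htri, hmem, hsqrt]
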